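/- Let n > m > ℓ ≥ 2 be integers and let H = ⟨a, b, c | a^(2^n) = 1, b^(2^m) = a^(2^m), c^(2^ℓ) = 1, [b,a] = c, [c,a] = c^(-2), [c,b] = c^(-2)⟩. Let S be a commutative ring of characteristic 4 with a maximal ideal n satisfying 2 ∈ n and 2 ∉ n². Set A = a − 1 in SH and Θ = Δ(SH : n). Then A^(2^(m+1)) ∉ Θ^(1 + 2^(m+1)). -/

import Mathlib

/-- Relators of the group `H` from the paper:
`H = ⟨a,b,c ∣ a^(2^n) = 1, b^(2^m) = a^(2^m), c^(2^l) = 1, [b,a] = c, [c,a] = c⁻², [c,b] = c⁻²⟩`,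
where `[g,h] = g⁻¹h⁻¹gh`.  Generators: `0 ↦ a`, `1 ↦ b`, `2 ↦ c`. -/
def hrels (n m l : ℕ) : Set (FreeGroup (Fin 3)) :=
  {FreeGroup.of 0 ^ 2 ^ n, FreeGroup.of 1 ^ 2 ^ m * (FreeGroup.of 0 ^ 2 ^ m)⁻¹,
   FreeGroup.of 2 ^ 2 ^ l,
   (FreeGroup.of 1)⁻¹ * (FreeGroup.of 0)⁻¹ * FreeGroup.of 1 * FreeGroup.of 0 * (FreeGroup.of 2)⁻¹,
   (FreeGroup.of 2)⁻¹ * (FreeGroup.of 0)⁻¹ * FreeGroup.of 2 * FreeGroup.of 0 * FreeGroup.of 2 ^ 2,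
   (FreeGroup.of 2)⁻¹ * (FreeGroup.of 1)⁻¹ * FreeGroup.of 2 * FreeGroup.of 1 * FreeGroup.of 2 ^ 2}

/-- The group `H` of the paper. -/
def GrpH (n m l : ℕ) : Type := PresentedGroup (hrels n m l)

instance (n m l : ℕ) : Group (GrpH n m l) := by unfold GrpH; infer_instance

/-- The augmentation map `ε : SH → S`, sending `Σ α_h h` to `Σ α_h`. -/
noncomputable def aug (S : Type) [CommRing S] (G : Type) [Group G] :
    MonoidAlgebra S G →ₐ[S] S := MonoidAlgebra.lift S S G 1

/-- The relative augmentation ideal `Δ(SG : n) = ε⁻¹(n) = {x ∈ SG : ε(x) ∈ n}`. -/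
noncomputable def relAugIdeal (S : Type) [CommRing S] (nn : Ideal S) (G : Type) [Group G] :
    Ideal (MonoidAlgebra S G) := Ideal.comap (aug S G) nn

/-- `A = a - 1 ∈ SH`. -/
noncomputable def elA (S : Type) [CommRing S] (n m l : ℕ) : MonoidAlgebra S (GrpH n m l) :=
  MonoidAlgebra.of S (GrpH n m l) (PresentedGroup.of 0) - 1
/-- `B = b - 1 ∈ SH`. -/
noncomputable def elB (S : Type) [CommRing S] (n m l : ℕ) : MonoidAlgebra S (GrpH n m l) :=
  MonoidAlgebra.of S (GrpH n m l) (PresentedGroup.of 1) - 1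
/-- `C = c - 1 ∈ SH`. -/
noncomputable def elC (S : Type) [CommRing S] (n m l : ℕ) : MonoidAlgebra S (GrpH n m l) :=
  MonoidAlgebra.of S (GrpH n m l) (PresentedGroup.of 2) - 1

lemma aug_single (S : Type) [CommRing S] (G : Type) [Group G] (a : G) (b : S) :
    aug S G (MonoidAlgebra.single a b) = b := by
  unfold aug
  rw [MonoidAlgebra.lift_single]
  simp

lemma pow_sub_one_two_pow {R : Type*} [CommRing R] (h4 : (4:R) = 0) (x : R) (k : ℕ) :
    (x - 1) ^ 2 ^ (k+1) = x ^ 2 ^ (k+1) - 1 + 2 * (1 - x ^ 2 ^ k) := by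
  induction k with
  | zero => ring
  | succ k ih =>
    have h : (x - 1) ^ 2 ^ (k+2) = ((x - 1) ^ 2 ^ (k+1)) ^ 2 := by
      rw [← pow_mul, pow_succ]
    have h2 : x ^ 2 ^ (k+2) = (x ^ 2 ^ (k+1)) ^ 2 := by rw [← pow_mul, pow_succ]
    rw [h, ih, h2]
    generalize x ^ 2 ^ (k+1) = X
    generalize x ^ 2 ^ k = Z
    linear_combination h4 * ((1 - Z) * (X - 1) + (1 - Z) ^ 2)

abbrev Gc (m : ℕ) := Multiplicative (ZMod (2 ^ (m+1)))

instance (m : ℕ) : NeZero (2 ^ (m+1)) := ⟨by positivity⟩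

section
variable (m : ℕ) (T : Type) [CommRing T]

noncomputable def cfun (x : Gc m) : T := if (Multiplicative.toAdd x).val < 2 ^ m then 1 else 0

noncomputable def gg : Gc m := Multiplicative.ofAdd 1

lemma gg_pow (k : ℕ) : (gg m) ^ k = Multiplicative.ofAdd ((k : ZMod (2^(m+1)))) := by
  unfold gg
  rw [← ofAdd_nsmul]
  simp [nsmul_eq_mul]

lemma gg_pow_top : (gg m) ^ (2^(m+1)) = 1 := by
  rw [gg_pow]
  have : ((2^(m+1) : ℕ) : ZMod (2^(m+1))) = 0 := ZMod.natCast_self _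
  rw [this, ofAdd_zero]

lemma gg_surj (a : Gc m) : ∃ k : ℕ, (gg m) ^ k = a := by
  refine ⟨(Multiplicative.toAdd a).val, ?_⟩
  rw [gg_pow]
  have : (((Multiplicative.toAdd a).val : ℕ) : ZMod (2^(m+1))) = Multiplicative.toAdd a :=
    ZMod.natCast_rightInverse _
  rw [this]
  rfl

lemma cfun_one : cfun m T 1 = 1 := by
  unfold cfun
  simp [ZMod.val_zero]

lemma val_pow2m : ((Multiplicative.toAdd ((gg m) ^ (2^m)))).val = 2 ^ m := by
  rw [gg_pow]
  simp only [toAdd_ofAdd]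
  refine ZMod.val_cast_of_lt ?_
  rw [pow_succ]
  have : 0 < (2:ℕ)^m := by positivity
  omega

lemma cfun_d : cfun m T ((gg m) ^ (2^m)) = 0 := by
  unfold cfun
  rw [val_pow2m]
  simp

lemma cfun_shift (x : Gc m) : cfun m T ((gg m) ^ (2^m) * x) = 1 - cfun m T x := by
  unfold cfun
  have hpow : (2:ℕ)^(m+1) = 2^m + 2^m := by rw [pow_succ]; omega
  have hval : (Multiplicative.toAdd ((gg m) ^ (2^m) * x)).val
      = ((2^m) + (Multiplicative.toAdd x).val) % (2^(m+1)) := by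
    rw [toAdd_mul, ZMod.val_add, val_pow2m]
  have hx : (Multiplicative.toAdd x).val < 2^(m+1) := ZMod.val_lt _
  by_cases h : (Multiplicative.toAdd x).val < 2 ^ m
  · have : (2^m + (Multiplicative.toAdd x).val) % (2^(m+1)) = 2^m + (Multiplicative.toAdd x).val :=
      Nat.mod_eq_of_lt (by omega)
    rw [hval, this]
    simp [h]
  · have heq : 2^m + (Multiplicative.toAdd x).val
        = ((Multiplicative.toAdd x).val - 2^m) + 1 * 2^(m+1) := by omega
    have : (2^m + (Multiplicative.toAdd x).val) % (2^(m+1))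
        = (Multiplicative.toAdd x).val - 2^m := by
      rw [heq, Nat.add_mul_mod_self_right, Nat.mod_eq_of_lt (by omega)]
    rw [hval, this]
    simp [h]
    omega

noncomputable def psi (x : MonoidAlgebra T (Gc m)) : T :=
  Finsupp.sum x.coeff fun a b => b * cfun m T a

lemma psi_add (x y : MonoidAlgebra T (Gc m)) : psi m T (x + y) = psi m T x + psi m T y :=
  by unfold psi; rw [MonoidAlgebra.coeff_add]; exact Finsupp.sum_add_index' (fun a => by simp) (fun a b c => by simp [add_mul])

lemma psi_single (a : Gc m) (b : T) : psi m T (MonoidAlgebra.single a b) = b * cfun m T a :=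
  by unfold psi; rw [MonoidAlgebra.coeff_single]; exact Finsupp.sum_single_index (by simp)

lemma psi_zero : psi m T 0 = 0 := by unfold psi; rw [MonoidAlgebra.coeff_zero]; exact Finsupp.sum_zero_index

lemma psi_smul (b : T) (x : MonoidAlgebra T (Gc m)) : psi m T (b • x) = b * psi m T x := by
  unfold psi
  rw [MonoidAlgebra.coeff_smul]
  rw [Finsupp.sum_smul_index' (fun a => by simp)]
  rw [Finsupp.mul_sum]
  congr 1; ext a c; simp [smul_eq_mul]; ring

lemma psi_sub (x y : MonoidAlgebra T (Gc m)) : psi m T (x - y) = psi m T x - psi m T y := by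
  have := psi_add m T (x - y) y
  rw [sub_add_cancel] at this
  linear_combination -this

lemma psi_of (a : Gc m) : psi m T (MonoidAlgebra.of T (Gc m) a) = cfun m T a := by
  show psi m T (MonoidAlgebra.single a 1) = _
  rw [psi_single, one_mul]

lemma psi_one : psi m T 1 = 1 := by
  have := psi_of m T 1
  rw [map_one] at this
  rw [this, cfun_one]

end


lemma key_lemma (m : ℕ) (T : Type) [CommRing T] (h4 : (4:T) = 0) (h2ne : (2:T) ≠ 0)
    (nb : Ideal T) (h2mem : (2:T) ∈ nb) (hnbsq : nb * nb = ⊥) :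
    (MonoidAlgebra.of T (Gc m) (gg m) - 1) ^ 2 ^ (m+1)
      ∉ (Ideal.comap (aug T (Gc m)) nb) ^ (1 + 2 ^ (m+1)) := by
  intro hmem
  rw [show (1 + 2^(m+1)) = 2^(m+1) + 1 from by omega] at hmem
  set γ : MonoidAlgebra T (Gc m) := MonoidAlgebra.of T (Gc m) (gg m) with hγ
  set δ : MonoidAlgebra T (Gc m) := MonoidAlgebra.of T (Gc m) ((gg m) ^ (2^m)) with hδ
  have hδγ : δ = γ ^ (2^m) := by rw [hδ, hγ, map_pow]
  have h4R : (4 : MonoidAlgebra T (Gc m)) = 0 := by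
    have : (algebraMap T (MonoidAlgebra T (Gc m))) (4:T) = 4 := map_ofNat _ 4
    rw [← this, h4, map_zero]
  have h2R : (2 : MonoidAlgebra T (Gc m)) = algebraMap T (MonoidAlgebra T (Gc m)) (2:T) :=
    (map_ofNat _ 2).symm
  have hγtop : γ ^ (2^(m+1)) = 1 := by rw [hγ, ← map_pow, gg_pow_top, map_one]
  have hA : (γ - 1) ^ 2 ^ (m+1) = 2 * (1 - δ) := by
    rw [pow_sub_one_two_pow h4R γ m, hγtop, hδγ]
    ring
  set P : Ideal (MonoidAlgebra T (Gc m)) :=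
    Ideal.map (algebraMap T (MonoidAlgebra T (Gc m))) nb with hP
  set Q : Ideal (MonoidAlgebra T (Gc m)) := Ideal.span {γ - 1} with hQ
  have hof : ∀ a : Gc m, MonoidAlgebra.of T (Gc m) a - 1 ∈ Q := by
    intro a
    obtain ⟨k, rfl⟩ := gg_surj m a
    induction k with
    | zero => rw [pow_zero, map_one, sub_self]; exact zero_mem _
    | succ k ih =>
      have h : MonoidAlgebra.of T (Gc m) (gg m ^ (k+1)) - 1
          = MonoidAlgebra.of T (Gc m) (gg m ^ k) * (γ - 1)
            + (MonoidAlgebra.of T (Gc m) (gg m ^ k) - 1) := by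
        rw [pow_succ (gg m) k, map_mul, hγ]; ring
      rw [h]
      exact add_mem (Ideal.mul_mem_left _ _ (Ideal.mem_span_singleton_self _)) ih
  have hQmem : ∀ y : MonoidAlgebra T (Gc m),
      y - algebraMap T (MonoidAlgebra T (Gc m)) (aug T (Gc m) y) ∈ Q := by
    intro y
    refine MonoidAlgebra.induction_on
      (motive := fun y => y - algebraMap T (MonoidAlgebra T (Gc m)) (aug T (Gc m) y) ∈ Q) y ?_ ?_ ?_
    · intro a
      have h1 : aug T (Gc m) (MonoidAlgebra.of T (Gc m) a) = 1 := by
        show aug T (Gc m) (MonoidAlgebra.single a 1) = 1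
        rw [aug_single]
      rw [h1, map_one]
      exact hof a
    · intro f g hf hg
      have h : f + g - algebraMap T (MonoidAlgebra T (Gc m)) (aug T (Gc m) (f + g))
          = (f - algebraMap T (MonoidAlgebra T (Gc m)) (aug T (Gc m) f))
            + (g - algebraMap T (MonoidAlgebra T (Gc m)) (aug T (Gc m) g)) := by
        rw [map_add, map_add]; ring
      rw [h]; exact add_mem hf hg
    · intro r f hf
      have h : r • f - algebraMap T (MonoidAlgebra T (Gc m)) (aug T (Gc m) (r • f))
          = (algebraMap T (MonoidAlgebra T (Gc m)) r)
            * (f - algebraMap T (MonoidAlgebra T (Gc m)) (aug T (Gc m) f)) := by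
        rw [map_smul, smul_eq_mul, map_mul, Algebra.smul_def]; ring
      rw [h]
      exact Ideal.mul_mem_left _ _ hf
  have hTheta : Ideal.comap (aug T (Gc m)) nb ≤ P ⊔ Q := by
    intro x hx
    have hxa : aug T (Gc m) x ∈ nb := hx
    have h : x = algebraMap T (MonoidAlgebra T (Gc m)) (aug T (Gc m) x)
        + (x - algebraMap T (MonoidAlgebra T (Gc m)) (aug T (Gc m) x)) := by ring
    rw [h]
    exact Submodule.add_mem_sup (Ideal.mem_map_of_mem _ hxa) (hQmem x)
  have hPP : P * P = ⊥ := by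
    rw [hP, ← Ideal.map_mul, hnbsq, Ideal.map_bot]
  have hPQ : ∀ j : ℕ, (P ⊔ Q) ^ (j+1) ≤ Q ^ (j+1) ⊔ P * Q ^ j := by
    intro j
    induction j with
    | zero =>
      simp only [zero_add, pow_one, pow_zero, Ideal.one_eq_top, Ideal.mul_top]
      exact sup_le le_sup_right le_sup_left
    | succ j ih =>
      calc (P ⊔ Q) ^ (j+1+1) = (P ⊔ Q) ^ (j+1) * (P ⊔ Q) := pow_succ _ _
        _ ≤ (Q ^ (j+1) ⊔ P * Q ^ j) * (P ⊔ Q) := Ideal.mul_mono_left ih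
        _ = Q^(j+1) * P ⊔ Q^(j+1) * Q ⊔ (P * Q^j * P ⊔ P * Q^j * Q) := by
            rw [Ideal.sup_mul, Ideal.mul_sup, Ideal.mul_sup]
        _ ≤ Q ^ (j+1+1) ⊔ P * Q ^ (j+1) := by
            refine sup_le (sup_le ?_ ?_) (sup_le ?_ ?_)
            · rw [mul_comm]; exact le_sup_right
            · rw [← pow_succ]; exact le_sup_left
            · rw [mul_comm (P * Q^j) P, ← mul_assoc, hPP]
              simp
            · rw [mul_assoc, ← pow_succ]; exact le_sup_right
  set w : MonoidAlgebra T (Gc m) := (1 - δ) * (γ - 1) with hw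
  have hψw : ∀ v : MonoidAlgebra T (Gc m), ∃ u : T, psi m T (w * v) = 2 * u := by
    intro v
    refine MonoidAlgebra.induction_on
      (motive := fun v => ∃ u : T, psi m T (w * v) = 2 * u) v ?_ ?_ ?_
    · intro a
      refine ⟨cfun m T (gg m * a) - cfun m T a, ?_⟩
      have e1 : γ * MonoidAlgebra.of T (Gc m) a = MonoidAlgebra.of T (Gc m) (gg m * a) :=
        (map_mul (MonoidAlgebra.of T (Gc m)) _ _).symm
      have e2 : δ * MonoidAlgebra.of T (Gc m) (gg m * a)
          = MonoidAlgebra.of T (Gc m) ((gg m)^(2^m) * (gg m * a)) :=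
        (map_mul (MonoidAlgebra.of T (Gc m)) _ _).symm
      have e3 : δ * MonoidAlgebra.of T (Gc m) a
          = MonoidAlgebra.of T (Gc m) ((gg m)^(2^m) * a) :=
        (map_mul (MonoidAlgebra.of T (Gc m)) _ _).symm
      have expand : w * MonoidAlgebra.of T (Gc m) a
          = MonoidAlgebra.of T (Gc m) (gg m * a) - MonoidAlgebra.of T (Gc m) a
            - MonoidAlgebra.of T (Gc m) ((gg m)^(2^m) * (gg m * a))
            + MonoidAlgebra.of T (Gc m) ((gg m)^(2^m) * a) := by
        rw [← e2, ← e3, ← e1, hw]; ring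
      rw [expand, psi_add, psi_sub, psi_sub, psi_of, psi_of, psi_of, psi_of,
        cfun_shift, cfun_shift]
      ring
    · rintro f g ⟨u1, hu1⟩ ⟨u2, hu2⟩
      exact ⟨u1 + u2, by rw [mul_add, psi_add, hu1, hu2]; ring⟩
    · rintro r f ⟨u, hu⟩
      refine ⟨r * u, ?_⟩
      rw [mul_smul_comm, psi_smul, hu]; ring
  have hψQK : ∀ x ∈ Q ^ (2^(m+1) + 1), psi m T x = 0 := by
    intro x hx
    rw [hQ, Ideal.span_singleton_pow, Ideal.mem_span_singleton'] at hx
    obtain ⟨v, rfl⟩ := hx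
    have h : v * (γ - 1) ^ (2^(m+1) + 1) = (2:T) • (w * v) := by
      rw [pow_succ (γ - 1) (2^(m+1)), hA, hw, Algebra.smul_def, ← h2R]
      ring
    rw [h, psi_smul]
    obtain ⟨u, hu⟩ := hψw v
    rw [hu, ← mul_assoc]
    have h22 : (2:T) * 2 = 4 := by norm_num
    rw [h22, h4, zero_mul]
  have hp2 : ∀ p ∈ P, (2 : MonoidAlgebra T (Gc m)) * p = 0 := by
    intro p hp
    have hp' : p ∈ Ideal.span ((algebraMap T (MonoidAlgebra T (Gc m))) '' nb) := hp
    refine Submodule.span_induction ?_ ?_ ?_ ?_ hp'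
    · rintro x ⟨s, hs, rfl⟩
      have h2s : (2:T) * s = 0 := by
        have h' : (2:T) * s ∈ nb * nb := Ideal.mul_mem_mul h2mem hs
        rwa [hnbsq, Ideal.mem_bot] at h'
      rw [h2R, ← map_mul, h2s, map_zero]
    · rw [mul_zero]
    · intro x y _ _ hx hy
      rw [mul_add, hx, hy, add_zero]
    · intro r x _ hx
      rw [mul_smul_comm, hx, smul_zero]
  have hψPQ : ∀ x ∈ P * Q ^ (2^(m+1)), psi m T x = 0 := by
    intro x hx
    refine Submodule.mul_induction_on hx ?_ ?_
    · intro p hp t ht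
      rw [hQ, Ideal.span_singleton_pow, Ideal.mem_span_singleton'] at ht
      obtain ⟨v, rfl⟩ := ht
      have h : p * (v * (γ - 1) ^ 2 ^ (m+1))
          = ((2 : MonoidAlgebra T (Gc m)) * p) * (v * (1 - δ)) := by
        rw [hA]; ring
      rw [h, hp2 p hp, zero_mul, psi_zero]
    · intro x y hx hy
      rw [psi_add, hx, hy, add_zero]
  have hmem2 : (γ - 1) ^ 2 ^ (m+1) ∈ Q ^ (2^(m+1) + 1) ⊔ P * Q ^ (2^(m+1)) := by
    have step1 : (Ideal.comap (aug T (Gc m)) nb) ^ (2^(m+1) + 1) ≤ (P ⊔ Q) ^ (2^(m+1) + 1) :=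
      Ideal.pow_right_mono hTheta _
    exact hPQ (2^(m+1)) (step1 hmem)
  have hzero : psi m T ((γ - 1) ^ 2 ^ (m+1)) = 0 := by
    rw [Submodule.mem_sup] at hmem2
    obtain ⟨y, hy, z, hz, hyz⟩ := hmem2
    rw [← hyz, psi_add, hψQK y hy, hψPQ z hz, add_zero]
  have htwo : psi m T ((γ - 1) ^ 2 ^ (m+1)) = 2 := by
    rw [hA]
    have h : (2 : MonoidAlgebra T (Gc m)) * (1 - δ) = (2:T) • ((1 : MonoidAlgebra T (Gc m)) - δ) := by
      rw [Algebra.smul_def, ← h2R]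
    rw [h, psi_smul, psi_sub, psi_one, hδ, psi_of, cfun_d]
    ring
  rw [hzero] at htwo
  exact h2ne htwo.symm

noncomputable def φmap (n m l : ℕ) (h1 : m < n) : GrpH n m l →* Gc m :=
  PresentedGroup.toGroup (f := fun i => if i.val = 2 then 1 else Multiplicative.ofAdd 1) (by
    intro r hr
    have key : (Multiplicative.ofAdd (1 : ZMod (2^(m+1)))) ^ 2 ^ n = 1 := by
      have : ((2^n : ℕ) : ZMod (2^(m+1))) = 0 := by
        rw [ZMod.natCast_eq_zero_iff]
        exact pow_dvd_pow 2 (by omega)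
      rw [← ofAdd_nsmul]
      simp only [nsmul_eq_mul, mul_one, this, ofAdd_zero]
    rcases hr with rfl | rfl | rfl | rfl | rfl | rfl <;>
      simp only [map_mul, map_pow, map_inv, FreeGroup.lift_apply_of] <;>
      norm_num [key])

theorem φmap_of (n m l : ℕ) (h1 : m < n) (i : Fin 3) :
    φmap n m l h1 (PresentedGroup.of i) = if i.val = 2 then 1 else Multiplicative.ofAdd 1 :=
  PresentedGroup.toGroup.of _


theorem stmt15 (n m l : ℕ) (h1 : n > m) (h2 : m > l) (h3 : 2 ≤ l)
    (S : Type) [CommRing S] (hchar : CharP S 4)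
    (nn : Ideal S) (hnn : nn.IsMaximal) (h2n : (2 : S) ∈ nn) (h2n2 : (2 : S) ∉ nn ^ 2) :
    elA S n m l ^ 2 ^ (m + 1) ∉ relAugIdeal S nn (GrpH n m l) ^ (1 + 2 ^ (m + 1)) := by
  intro hmem
  set T := S ⧸ (nn ^ 2) with hT
  let q : S →+* T := Ideal.Quotient.mk (nn ^ 2)
  have h4S : (4 : S) = 0 := by
    have := CharP.cast_eq_zero S 4
    simpa using this
  have h4 : (4 : T) = 0 := by
    have : q (4 : S) = (4 : T) := map_ofNat _ 4
    rw [← this, h4S, map_zero]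
  have h2T : (2 : T) = q (2 : S) := (map_ofNat _ 2).symm
  have h2ne : (2 : T) ≠ 0 := by
    rw [h2T]
    intro hc
    exact h2n2 (by rwa [Ideal.Quotient.eq_zero_iff_mem] at hc)
  set nb : Ideal T := nn.map q with hnb
  have h2mem : (2 : T) ∈ nb := by
    rw [h2T]
    exact Ideal.mem_map_of_mem _ h2n
  have hnbsq : nb * nb = ⊥ := by
    rw [hnb, ← Ideal.map_mul, ← pow_two, Ideal.map_quotient_self]
  -- the ring hom
  let φ := φmap n m l h1
  let Φ : MonoidAlgebra S (GrpH n m l) →+* MonoidAlgebra T (Gc m) :=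
    MonoidAlgebra.liftNCRingHom ((algebraMap T (MonoidAlgebra T (Gc m))).comp q)
      ((MonoidAlgebra.of T (Gc m)).comp φ) (fun _ _ => Commute.all _ _)
  have hΦsingle : ∀ (a : GrpH n m l) (b : S),
      Φ (MonoidAlgebra.single a b) = algebraMap T (MonoidAlgebra T (Gc m)) (q b)
        * MonoidAlgebra.of T (Gc m) (φ a) := by
    intro a b
    show MonoidAlgebra.liftNC _ _ _ = _
    rw [MonoidAlgebra.liftNC_single]
    rfl
  -- aug compat
  have hcomm : ∀ x : MonoidAlgebra S (GrpH n m l),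
      aug T (Gc m) (Φ x) = q (aug S (GrpH n m l) x) := by
    intro x
    have : ((aug T (Gc m)).toRingHom).comp Φ = q.comp ((aug S (GrpH n m l)).toRingHom) := by
      apply MonoidAlgebra.ringHom_ext
      · intro b
        simp only [RingHom.coe_comp, Function.comp_apply, AlgHom.toRingHom_eq_coe,
          RingHom.coe_coe]
        rw [hΦsingle]
        simp only [map_one, mul_one]
        rw [show (algebraMap T (MonoidAlgebra T (Gc m))) (q b) = MonoidAlgebra.single 1 (q b)
            from rfl,
          aug_single, aug_single]
      · intro a
        simp only [RingHom.coe_comp, Function.comp_apply, AlgHom.toRingHom_eq_coe,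
          RingHom.coe_coe]
        rw [hΦsingle]
        simp only [map_one, one_mul]
        rw [aug_single, map_one]
        show aug T (Gc m) (MonoidAlgebra.single (φ a) 1) = 1
        rw [aug_single]
    exact RingHom.congr_fun this x
  -- Φ (elA) = of gg - 1
  have hφ0 : φ (PresentedGroup.of 0) = gg m := by
    show φmap n m l h1 (PresentedGroup.of 0) = gg m
    rw [φmap_of]
    rfl
  have hΦA : Φ (elA S n m l) = MonoidAlgebra.of T (Gc m) (gg m) - 1 := by
    unfold elA
    rw [map_sub, map_one]
    show Φ (MonoidAlgebra.single (PresentedGroup.of 0 : GrpH n m l) 1) - 1 = _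
    erw [hΦsingle]
    simp only [map_one, one_mul]
    rw [hφ0]
  -- transport the membership
  have hmap : Ideal.map Φ (relAugIdeal S nn (GrpH n m l)) ≤ Ideal.comap (aug T (Gc m)) nb := by
    rw [Ideal.map_le_iff_le_comap]
    intro x hx
    have hx' : aug S (GrpH n m l) x ∈ nn := hx
    show Φ x ∈ Ideal.comap (aug T (Gc m)) nb
    show aug T (Gc m) (Φ x) ∈ nb
    rw [hcomm]
    exact Ideal.mem_map_of_mem _ hx'
  have hmem2 : (MonoidAlgebra.of T (Gc m) (gg m) - 1) ^ 2 ^ (m+1)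
      ∈ (Ideal.comap (aug T (Gc m)) nb) ^ (1 + 2 ^ (m+1)) := by
    have h1' : Φ (elA S n m l ^ 2 ^ (m+1))
        ∈ Ideal.map Φ (relAugIdeal S nn (GrpH n m l) ^ (1 + 2 ^ (m+1))) :=
      Ideal.mem_map_of_mem _ hmem
    have hmp : ∀ k : ℕ, Ideal.map Φ (relAugIdeal S nn (GrpH n m l) ^ k)
        = (Ideal.map Φ (relAugIdeal S nn (GrpH n m l))) ^ k := by
      intro k
      induction k with
      | zero =>
        rw [Submodule.pow_zero, Submodule.pow_zero, Ideal.one_eq_top, Ideal.map_top]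
        exact Ideal.one_eq_top.symm
      | succ k ih =>
        calc Ideal.map Φ (relAugIdeal S nn (GrpH n m l) ^ (k+1))
            = Ideal.map Φ (relAugIdeal S nn (GrpH n m l) ^ k * relAugIdeal S nn (GrpH n m l)) :=
              congrArg (Ideal.map Φ) (Submodule.pow_succ _)
          _ = Ideal.map Φ (relAugIdeal S nn (GrpH n m l) ^ k)
              * Ideal.map Φ (relAugIdeal S nn (GrpH n m l)) := Ideal.map_mul Φ _ _
          _ = Ideal.map Φ (relAugIdeal S nn (GrpH n m l)) ^ k
              * Ideal.map Φ (relAugIdeal S nn (GrpH n m l)) :=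
              congrArg (· * Ideal.map Φ (relAugIdeal S nn (GrpH n m l))) ih
          _ = Ideal.map Φ (relAugIdeal S nn (GrpH n m l)) ^ (k+1) := (Submodule.pow_succ _).symm
    rw [hmp] at h1'
    have h2' := Ideal.pow_right_mono hmap (1 + 2 ^ (m+1)) h1'
    rwa [map_pow, hΦA] at h2'
  exact key_lemma m T h4 h2ne nb h2mem hnbsq hmem2
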